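/- Let k > N/2 and let ρ : ℝ^N → ℂ be such that x ↦ (1+|x|^k) ρ(x) belongs to L²(ℝ^N); let m = ρ̂ be the Fourier transform of ρ (so that m lies in the Sobolev space H^k(ℝ^N)). Then there is a constant C₁, depending only on N, k and ‖(1+|·|^k)ρ‖_{L²}, such that for every ε > 0, every p ∈ (1,∞), all Radon measures μ, ν on ℝ^N, and every singular kernel K that is restrictedly L^p bounded with bound C, the kernel (s,t) ↦ m((t−s)/ε) K(s,t) is restrictedly L^p bounded with bound C₁ C. In other words, the functions (s,t) ↦ m((t−s)/ε) are Schur multipliers with uniformly bounded Schur norms. -/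

import Mathlib

open MeasureTheory Filter Metric Complex Topology ENNReal

noncomputable section

abbrev Euc (N : ℕ) : Type := EuclideanSpace ℝ (Fin N)

/-- Fourier transform `ρ̂(s) = ∫ ρ(x) e^{-i s·x} dx`. -/
def ft {N : ℕ} (ρ : Euc N → ℂ) (s : Euc N) : ℂ :=
  ∫ x : Euc N, ρ x * Complex.exp (-(Complex.I * ((inner ℝ s x : ℝ) : ℂ)))

/-- bounded Borel compactly supported -/
def GoodFun {N : ℕ} (f : Euc N → ℂ) : Prop :=
  Measurable f ∧ (∃ Cf : ℝ, ∀ x, ‖f x‖ ≤ Cf) ∧ HasCompactSupport f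

/-- supports are separated -/
def Separated {N : ℕ} (f g : Euc N → ℂ) : Prop :=
  ∃ a > 0, ∀ x ∈ Function.support f, ∀ y ∈ Function.support g, a ≤ dist x y

/-- restrictedly L^p bounded with bound C -/
def RestrBdd {N : ℕ} (μ ν : Measure (Euc N)) (K : Euc N → Euc N → ℂ)
    (p p' C : ℝ) : Prop :=
  ∀ f g : Euc N → ℂ, GoodFun f → GoodFun g → Separated f g →
    Integrable (fun z : Euc N × Euc N => K z.1 z.2 * f z.2 * g z.1) (ν.prod μ) ∧
    ‖∫ s, ∫ t, K s t * f t * g s ∂μ ∂ν‖ ≤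
      C * (eLpNorm f (ENNReal.ofReal p) μ).toReal *
        (eLpNorm g (ENNReal.ofReal p') ν).toReal

/-- singular kernel: measurable, locally L² off the diagonal -/
def SingKernel {N : ℕ} (μ ν : Measure (Euc N)) (K : Euc N → Euc N → ℂ) : Prop :=
  Measurable (Function.uncurry K) ∧
  ∀ Q : Set (Euc N × Euc N), IsCompact Q → (∀ z ∈ Q, z.1 ≠ z.2) →
    ∫⁻ z in Q, (‖K z.1 z.2‖₊ : ℝ≥0∞) ^ 2 ∂(ν.prod μ) < ⊤

/- ### Auxiliary lemmas -/

lemma norm_exp_neg_I_mul (r : ℝ) : ‖Complex.exp (-(Complex.I * (r:ℂ)))‖ = 1 := by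
  simp [Complex.norm_exp]

lemma norm_exp_I_mul (r : ℝ) : ‖Complex.exp (Complex.I * (r:ℂ))‖ = 1 := by
  simp [Complex.norm_exp]

lemma weight_memL2 {N : ℕ} (k : ℕ) (hk : (N:ℝ)/2 < k) :
    MemLp (fun x : Euc N => ((1 + ‖x‖^k : ℝ))⁻¹) 2 volume := by
  have hpos : ∀ x : Euc N, (0:ℝ) < 1 + ‖x‖^k := fun x => by positivity
  have hcont : Continuous fun x : Euc N => ((1 + ‖x‖^k : ℝ))⁻¹ :=
    (continuous_const.add (continuous_norm.pow k)).inv₀ fun x => (hpos x).ne'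
  rw [memLp_two_iff_integrable_sq hcont.aestronglyMeasurable]
  have hr : (Module.finrank ℝ (Euc N) : ℝ) < ((2*k : ℕ) : ℝ) := by
    rw [finrank_euclideanSpace_fin]; push_cast; linarith
  have hbase : Integrable (fun x : Euc N => (1 + ‖x‖) ^ (-((2*k : ℕ) : ℝ))) volume :=
    integrable_one_add_norm hr
  refine (hbase.const_mul ((4:ℝ)^k)).mono' ((hcont.pow 2).aestronglyMeasurable) ?_
  filter_upwards with x
  set t := ‖x‖ with ht
  have ht0 : 0 ≤ t := norm_nonneg x
  have h1 : (1+t)^k ≤ 2^k * (1+t^k) := by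
    have hmax : (1+t) ≤ 2 * max 1 t := by
      rcases le_total t 1 with h | h
      · rw [max_eq_left h]; linarith
      · rw [max_eq_right h]; linarith
    calc (1+t)^k ≤ (2 * max 1 t)^k := by
          apply pow_le_pow_left₀ (by linarith) hmax
      _ = 2^k * (max 1 t)^k := mul_pow _ _ _
      _ ≤ 2^k * (1+t^k) := by
          gcongr
          rcases le_total t 1 with h | h
          · rw [max_eq_left h, one_pow]; nlinarith [pow_nonneg ht0 k]
          · rw [max_eq_right h]; nlinarith [pow_nonneg ht0 k]
  have key : (1+t)^(2*k) ≤ 4^k * (1+t^k)^2 := by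
    have e1 : (1+t)^(2*k) = ((1+t)^k)^2 := by rw [← pow_mul, mul_comm]
    have e2 : ((2:ℝ)^k)^2 = 4^k := by
      rw [← pow_mul, mul_comm, pow_mul]; norm_num
    rw [e1]
    calc ((1+t)^k)^2 ≤ (2^k * (1+t^k))^2 := by
          apply pow_le_pow_left₀ (by positivity) h1
      _ = 4^k * (1+t^k)^2 := by rw [mul_pow, e2]
  have hbpos : (0:ℝ) < (1+t)^(2*k) := by positivity
  have hrpow : (1 + t) ^ (-((2*k : ℕ) : ℝ)) = ((1+t)^(2*k))⁻¹ := by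
    rw [Real.rpow_neg (by linarith), Real.rpow_natCast]
  rw [hrpow]
  have hnorm : ‖((1 + t^k)⁻¹)^2‖ = ((1+t^k)^2)⁻¹ := by
    rw [Real.norm_eq_abs, _root_.abs_of_nonneg (by positivity), ← inv_pow]
  rw [hnorm]
  rw [show ((1+t^k)^2)⁻¹ = 1/(1+t^k)^2 by ring,
    show (4:ℝ)^k * ((1+t)^(2*k))⁻¹ = 4^k/(1+t)^(2*k) by ring,
    div_le_div_iff₀ (by positivity) hbpos]
  linarith

lemma rho_integrable {N : ℕ} (k : ℕ) (ρ : Euc N → ℂ)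
    (hw2 : MemLp (fun x : Euc N => ((1 + ‖x‖^k : ℝ))⁻¹) 2 volume)
    (hL2 : MemLp (fun x : Euc N => ((1 + ‖x‖ ^ k : ℝ) : ℂ) * ρ x) 2 volume) :
    Integrable ρ volume := by
  have h1 : MemLp ((fun x : Euc N => ((((1 + ‖x‖^k : ℝ))⁻¹ : ℝ) : ℂ)) •
      (fun x : Euc N => ((1 + ‖x‖ ^ k : ℝ) : ℂ) * ρ x)) 1 volume :=
    hL2.smul hw2.ofReal
  rw [memLp_one_iff_integrable] at h1
  refine h1.congr (Filter.Eventually.of_forall fun x => ?_)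
  have hpos : (0:ℝ) < 1 + ‖x‖^k := by positivity
  show ((((1 + ‖x‖^k : ℝ))⁻¹ : ℝ) : ℂ) * (((1 + ‖x‖ ^ k : ℝ) : ℂ) * ρ x) = ρ x
  rw [← mul_assoc, ← Complex.ofReal_mul, inv_mul_cancel₀ hpos.ne']
  simp

lemma ft_norm_le {N : ℕ} (ρ : Euc N → ℂ) (x : Euc N) :
    ‖ft ρ x‖ ≤ ∫ y, ‖ρ y‖ := by
  refine (norm_integral_le_integral_norm _).trans_eq ?_
  congr 1; funext y
  rw [norm_mul, norm_exp_neg_I_mul, mul_one]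

lemma ft_continuous {N : ℕ} (ρ : Euc N → ℂ) (hmeas : Measurable ρ)
    (hρint : Integrable ρ volume) : Continuous (ft ρ) := by
  apply continuous_of_dominated (bound := fun y => ‖ρ y‖)
  · intro x
    refine (hmeas.mul ?_).aestronglyMeasurable
    exact Complex.measurable_exp.comp
      (((Complex.measurable_ofReal.comp
        (Continuous.inner (continuous_const : Continuous fun _ : Euc N => x)
          continuous_id).measurable).const_mul Complex.I).neg)
  · intro x
    filter_upwards with y
    rw [norm_mul, norm_exp_neg_I_mul, mul_one]
  · exact hρint.norm
  · filter_upwards with y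
    refine continuous_const.mul (Complex.continuous_exp.comp ?_)
    exact (continuous_const.mul (Complex.continuous_ofReal.comp
      (Continuous.inner continuous_id continuous_const))).neg

/- ### Main theorem -/

/-- if `m = ρ̂` with `(1+|x|^k)ρ ∈ L²`, `k > N/2`, then the dilated
functions `(s,t) ↦ m((t-s)/ε)` are Schur multipliers with uniformly bounded
Schur norms: there is `C₁ = C₁(N, k, ‖(1+|·|^k)ρ‖₂)` that works for all `ε > 0`. -/
theorem sobolev_dilates_uniform_schur_multipliers
    {N : ℕ} (k : ℕ) (hk : (N : ℝ) / 2 < k)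
    (ρ : Euc N → ℂ) (hmeas : Measurable ρ)
    (hL2 : MemLp (fun x : Euc N => ((1 + ‖x‖ ^ k : ℝ) : ℂ) * ρ x) 2 volume)
    (m : Euc N → ℂ) (hm : ∀ x, m x = ft ρ x) :
    ∃ C₁ : ℝ, ∀ ε > (0 : ℝ),
      ∀ p p' C : ℝ, 1 < p → 1 / p + 1 / p' = 1 →
      ∀ μ ν : Measure (Euc N),
        IsLocallyFiniteMeasure μ → μ.InnerRegular →
        IsLocallyFiniteMeasure ν → ν.InnerRegular →
      ∀ K : Euc N → Euc N → ℂ, SingKernel μ ν K → RestrBdd μ ν K p p' C →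
        RestrBdd μ ν (fun s t => m (ε⁻¹ • (t - s)) * K s t) p p' (C₁ * C) := by
  have hρint : Integrable ρ volume := rho_integrable k ρ (weight_memL2 k hk) hL2
  have hmc : Continuous m := by
    rw [show m = ft ρ from funext hm]; exact ft_continuous ρ hmeas hρint
  have hmb : ∀ x, ‖m x‖ ≤ ∫ y, ‖ρ y‖ := fun x => by rw [hm]; exact ft_norm_le ρ x
  refine ⟨∫ y, ‖ρ y‖, ?_⟩
  intro ε hε p p' C hp hpp' μ ν hμloc hμreg hνloc hνreg K hK hKb
  haveI := hμloc; haveI := hνloc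
  haveI : SigmaFinite μ := sigmaFinite_of_locallyFinite
  haveI : SigmaFinite ν := sigmaFinite_of_locallyFinite
  intro f g hf hg hsep
  obtain ⟨hKint, hKbd⟩ := hKb f g hf hg hsep
  -- modulated test functions
  set F : Euc N → Euc N → ℂ :=
    fun y t => f t * Complex.exp (-(Complex.I * ((ε⁻¹ * inner ℝ t y : ℝ) : ℂ))) with hF
  set G : Euc N → Euc N → ℂ :=
    fun y s => g s * Complex.exp (Complex.I * ((ε⁻¹ * inner ℝ s y : ℝ) : ℂ)) with hG
  have hFgood : ∀ y, GoodFun (F y) := by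
    intro y
    obtain ⟨hfm, ⟨Cf, hCf⟩, hfc⟩ := hf
    refine ⟨hfm.mul (Complex.measurable_exp.comp (((Complex.measurable_ofReal.comp
      (((Continuous.inner continuous_id
        (continuous_const : Continuous fun _ : Euc N => y)).measurable).const_mul
          ε⁻¹)).const_mul Complex.I).neg)), ⟨Cf, fun t => ?_⟩, hfc.mul_right⟩
    rw [hF]
    rw [norm_mul, norm_exp_neg_I_mul, mul_one]
    exact hCf t
  have hGgood : ∀ y, GoodFun (G y) := by
    intro y
    obtain ⟨hgm, ⟨Cg, hCg⟩, hgc⟩ := hg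
    refine ⟨hgm.mul (Complex.measurable_exp.comp ((Complex.measurable_ofReal.comp
      (((Continuous.inner continuous_id
        (continuous_const : Continuous fun _ : Euc N => y)).measurable).const_mul
          ε⁻¹)).const_mul Complex.I)), ⟨Cg, fun s => ?_⟩, hgc.mul_right⟩
    rw [hG]
    rw [norm_mul, norm_exp_I_mul, mul_one]
    exact hCg s
  have hFGsep : ∀ y, Separated (F y) (G y) := by
    intro y
    obtain ⟨a0, ha0, hs⟩ := hsep
    exact ⟨a0, ha0, fun x hx z hz =>
      hs x (Function.support_mul_subset_left _ _ hx) z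
        (Function.support_mul_subset_left _ _ hz)⟩
  have hFnorm : ∀ y, eLpNorm (F y) (ENNReal.ofReal p) μ = eLpNorm f (ENNReal.ofReal p) μ :=
    fun y => eLpNorm_congr_norm_ae (Filter.Eventually.of_forall fun t => by
      rw [hF, norm_mul, norm_exp_neg_I_mul, mul_one])
  have hGnorm : ∀ y, eLpNorm (G y) (ENNReal.ofReal p') ν = eLpNorm g (ENNReal.ofReal p') ν :=
    fun y => eLpNorm_congr_norm_ae (Filter.Eventually.of_forall fun s => by
      rw [hG, norm_mul, norm_exp_I_mul, mul_one])
  have hY := fun y => hKb (F y) (G y) (hFgood y) (hGgood y) (hFGsep y)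
  -- exponential splitting
  have hsplit : ∀ s t y : Euc N,
      Complex.exp (-(Complex.I * ((inner ℝ (ε⁻¹ • (t - s)) y : ℝ) : ℂ))) =
      Complex.exp (-(Complex.I * ((ε⁻¹ * inner ℝ t y : ℝ) : ℂ))) *
      Complex.exp (Complex.I * ((ε⁻¹ * inner ℝ s y : ℝ) : ℂ)) := by
    intro s t y
    rw [← Complex.exp_add]
    congr 1
    rw [real_inner_smul_left, inner_sub_left]
    push_cast
    ring
  -- measurability of the dilated kernel integrand
  have hnewmeas : AEStronglyMeasurable (fun z : Euc N × Euc N =>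
      m (ε⁻¹ • (z.2 - z.1)) * K z.1 z.2 * f z.2 * g z.1) (ν.prod μ) := by
    refine Measurable.aestronglyMeasurable ?_
    exact (((hmc.comp
      ((continuous_snd.sub continuous_fst).const_smul ε⁻¹)).measurable.mul hK.1).mul
        (hf.1.comp measurable_snd)).mul (hg.1.comp measurable_fst)
  have hnewint : Integrable (fun z : Euc N × Euc N =>
      m (ε⁻¹ • (z.2 - z.1)) * K z.1 z.2 * f z.2 * g z.1) (ν.prod μ) := by
    refine (hKint.norm.const_mul (∫ y, ‖ρ y‖)).mono' hnewmeas ?_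
    filter_upwards with z
    simp only [norm_mul]
    rw [show ‖m (ε⁻¹ • (z.2 - z.1))‖ * ‖K z.1 z.2‖ * ‖f z.2‖ * ‖g z.1‖
        = ‖m (ε⁻¹ • (z.2 - z.1))‖ * (‖K z.1 z.2‖ * ‖f z.2‖ * ‖g z.1‖) from by ring]
    exact mul_le_mul_of_nonneg_right (hmb _) (by positivity)
  refine ⟨hnewint, ?_⟩
  -- the big Fubini integrand
  set Φ : (Euc N × Euc N) × Euc N → ℂ := fun w =>
    ρ w.2 * (K w.1.1 w.1.2 * F w.2 w.1.2 * G w.2 w.1.1) with hΦ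
  have hΦmeas : AEStronglyMeasurable Φ ((ν.prod μ).prod volume) := by
    refine Measurable.aestronglyMeasurable ?_
    have e1 : Continuous fun w : (Euc N × Euc N) × Euc N =>
        Complex.exp (-(Complex.I * ((ε⁻¹ * inner ℝ w.1.2 w.2 : ℝ) : ℂ))) :=
      Complex.continuous_exp.comp ((continuous_const.mul (Complex.continuous_ofReal.comp
        (continuous_const.mul (Continuous.inner continuous_fst.snd continuous_snd)))).neg)
    have e2 : Continuous fun w : (Euc N × Euc N) × Euc N =>
        Complex.exp (Complex.I * ((ε⁻¹ * inner ℝ w.1.1 w.2 : ℝ) : ℂ)) :=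
      Complex.continuous_exp.comp (continuous_const.mul (Complex.continuous_ofReal.comp
        (continuous_const.mul (Continuous.inner continuous_fst.fst continuous_snd))))
    exact (hmeas.comp measurable_snd).mul
      (((hK.1.comp measurable_fst).mul
        ((hf.1.comp (measurable_snd.comp measurable_fst)).mul e1.measurable)).mul
        ((hg.1.comp (measurable_fst.comp measurable_fst)).mul e2.measurable))
  have hΦint : Integrable Φ ((ν.prod μ).prod volume) := by
    refine (hKint.norm.mul_prod hρint.norm).mono' hΦmeas ?_
    filter_upwards with w
    rw [hΦ]
    simp only [hF, hG, norm_mul, norm_exp_neg_I_mul, norm_exp_I_mul, mul_one]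
    exact le_of_eq (by ring)
  -- the key identity
  have key : (∫ s, ∫ t, m (ε⁻¹ • (t - s)) * K s t * f t * g s ∂μ ∂ν) =
      ∫ y, ρ y * (∫ s, ∫ t, K s t * F y t * G y s ∂μ ∂ν) := by
    calc ∫ s, ∫ t, m (ε⁻¹ • (t - s)) * K s t * f t * g s ∂μ ∂ν
        = ∫ z : Euc N × Euc N,
            m (ε⁻¹ • (z.2 - z.1)) * K z.1 z.2 * f z.2 * g z.1 ∂(ν.prod μ) :=
          (integral_prod _ hnewint).symm
      _ = ∫ z : Euc N × Euc N, (∫ y, Φ (z, y)) ∂(ν.prod μ) := by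
          congr 1; funext z
          have hz : (∫ y, Φ (z, y)) =
              (∫ y, ρ y *
                Complex.exp (-(Complex.I * ((inner ℝ (ε⁻¹ • (z.2 - z.1)) y : ℝ) : ℂ)))) *
              (K z.1 z.2 * f z.2 * g z.1) := by
            rw [← integral_mul_const]
            congr 1; funext y
            rw [hΦ, hF, hG]
            simp only
            rw [hsplit z.1 z.2 y]
            ring
          rw [hz, hm]
          simp only [ft]
          ring
      _ = ∫ y, (∫ z : Euc N × Euc N, Φ (z, y) ∂(ν.prod μ)) :=
          integral_integral_swap hΦint
      _ = ∫ y, ρ y * (∫ s, ∫ t, K s t * F y t * G y s ∂μ ∂ν) := by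
          congr 1; funext y
          rw [show (fun z : Euc N × Euc N => Φ (z, y)) =
              fun z : Euc N × Euc N => ρ y * (K z.1 z.2 * F y z.2 * G y z.1) from rfl]
          rw [integral_const_mul]
          congr 1
          exact integral_prod _ (hY y).1
  show ‖∫ s, ∫ t, m (ε⁻¹ • (t - s)) * K s t * f t * g s ∂μ ∂ν‖ ≤ _
  rw [key]
  calc ‖∫ y, ρ y * (∫ s, ∫ t, K s t * F y t * G y s ∂μ ∂ν)‖
      ≤ ∫ y, ‖ρ y * (∫ s, ∫ t, K s t * F y t * G y s ∂μ ∂ν)‖ :=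
        norm_integral_le_integral_norm _
    _ ≤ ∫ y, ‖ρ y‖ * (C * (eLpNorm f (ENNReal.ofReal p) μ).toReal *
          (eLpNorm g (ENNReal.ofReal p') ν).toReal) := by
        refine integral_mono_of_nonneg (Filter.Eventually.of_forall fun y => norm_nonneg _)
          (hρint.norm.mul_const _) (Filter.Eventually.of_forall fun y => ?_)
        dsimp only
        rw [norm_mul]
        refine mul_le_mul_of_nonneg_left ?_ (norm_nonneg _)
        have h2 := (hY y).2
        rwa [hFnorm y, hGnorm y] at h2
    _ = (∫ y, ‖ρ y‖) * (C * (eLpNorm f (ENNReal.ofReal p) μ).toReal *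
          (eLpNorm g (ENNReal.ofReal p') ν).toReal) := integral_mul_const _ _
    _ = (∫ y, ‖ρ y‖) * C * (eLpNorm f (ENNReal.ofReal p) μ).toReal *
          (eLpNorm g (ENNReal.ofReal p') ν).toReal := by ring
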